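/- For every integer n ≥ 1, ∂(xⁿ z²) = −q² [n]_{q⁴} x^{n−1} + (q² + 1) [n+1]_{q⁴} xⁿ − [n+2]_{q⁴} x^{n+1}. -/

import Mathlib

/-- The q-integer `[n]_s = 1 + s + ⋯ + s^(n-1)`. -/
noncomputable def qint (s : ℂ) (n : ℕ) : ℂ := ∑ i ∈ Finset.range n, s ^ i

theorem partial_xn_z_sq
    (q : ℝ) (hq0 : 0 < q) (hq1 : q < 1)
    {A : Type*} [Ring A] [Algebra ℂ A]
    (z w : A)
    (hzw : w * z - ((q : ℂ) ^ 2) • (z * w) = ((1 : ℂ) - (q : ℂ) ^ 2) • (1 : A))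
    (x : A) (hx : x = 1 - z * w)
    (σ : A ≃ₐ[ℂ] A) (hσz : σ z = ((q : ℂ) ^ 2) • z)
    (hσw : σ w = (((q : ℂ) ^ 2)⁻¹) • w)
    (D : A →ₗ[ℂ] A)
    (hD : ∀ a b : A, D (a * b) = D a * σ b + a * D b)
    (hDz : D z = w) (hDw : D w = 0)
    (n : ℕ) (hn : 1 ≤ n)
    :
    D (x ^ n * z ^ 2) =
      (-((q : ℂ) ^ 2 * qint ((q : ℂ) ^ 4) n)) • x ^ (n - 1) +
        (((q : ℂ) ^ 2 + 1) * qint ((q : ℂ) ^ 4) (n + 1)) • x ^ n -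
        (qint ((q : ℂ) ^ 4) (n + 2)) • x ^ (n + 1) := by
  obtain ⟨m, rfl⟩ : ∃ m, n = m + 1 := ⟨n - 1, (Nat.succ_pred_eq_of_pos hn).symm⟩
  have hq4 : ((q : ℂ) ^ 4) = ((q : ℂ) ^ 2) ^ 2 := by ring
  rw [hq4]
  set Q : ℂ := (q : ℂ) ^ 2 with hQdef
  have hQ0 : Q ≠ 0 := pow_ne_zero _ (by exact_mod_cast hq0.ne')
  have hqint : ∀ (s : ℂ) (k : ℕ), qint s (k + 1) = s * qint s k + 1 := by
    intro s k
    simpa [qint] using geom_sum_succ (x := s) (n := k)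
  -- basic relations
  have hzw' : z * w = 1 - x := by rw [hx]; abel
  have hwz : w * z = (1 : A) - Q • x := by
    have h := hzw
    rw [sub_eq_iff_eq_add] at h
    rw [h, hzw']
    module
  have hxz : x * z = Q • (z * x) := by
    have h1 : x * z = z - z * (w * z) := by rw [hx]; noncomm_ring
    rw [h1, hwz, mul_sub, mul_one, mul_smul_comm]
    module
  have hwx : w * x = Q • (x * w) := by
    have h1 : w * x = w - w * z * w := by rw [hx]; noncomm_ring
    rw [h1, hwz, sub_mul, one_mul, smul_mul_assoc]
    module
  have hw2x : w ^ 2 * x = (Q ^ 2) • (x * w ^ 2) := by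
    calc w ^ 2 * x = w * (w * x) := by noncomm_ring
      _ = Q • (w * (x * w)) := by rw [hwx, mul_smul_comm]
      _ = Q • ((w * x) * w) := by rw [mul_assoc]
      _ = Q • ((Q • (x * w)) * w) := by rw [hwx]
      _ = (Q ^ 2) • (x * w ^ 2) := by
          simp [smul_smul, smul_mul_assoc, mul_assoc, pow_two]
  have hσx : σ x = x := by
    rw [hx, map_sub, map_one, map_mul, hσz, hσw, smul_mul_assoc, mul_smul_comm,
      smul_smul, mul_inv_cancel₀ hQ0, one_smul]
  have hD1 : D (1 : A) = 0 := by
    have h := hD 1 1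
    rw [mul_one, map_one (σ : A ≃ₐ[ℂ] A), mul_one, one_mul] at h
    rw [left_eq_add] at h
    exact h
  have hDx : D x = -(Q⁻¹ • w ^ 2) := by
    have h2 : D (z * w) = Q⁻¹ • w ^ 2 := by
      rw [hD z w, hDz, hDw, hσw, mul_smul_comm, mul_zero, add_zero, ← pow_two]
    rw [hx, map_sub, hD1, h2, zero_sub]
  have hDxn : ∀ k : ℕ, D (x ^ (k + 1)) =
      (-(Q⁻¹) * qint (Q ^ 2) (k + 1)) • (x ^ k * w ^ 2) := by
    intro k
    induction k with
    | zero => simp [hDx, hqint, qint, neg_smul]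
    | succ k ih =>
        have h1 : x ^ (k + 2) = x ^ (k + 1) * x := pow_succ x (k + 1)
        rw [h1, hD, hσx, ih, hDx, smul_mul_assoc, mul_assoc, hw2x, mul_smul_comm,
          smul_smul, ← mul_assoc, ← pow_succ, mul_neg, mul_smul_comm,
          hqint (Q ^ 2) (k + 1)]
        match_scalars
        field_simp
        ring
  have hσz2 : σ (z ^ 2) = (Q ^ 2) • z ^ 2 := by
    rw [map_pow, hσz, smul_pow]
  have hDz2 : D (z ^ 2) = (Q + 1) • (1 : A) - (Q ^ 2 + 1) • x := by
    rw [pow_two, hD z z, hDz, hσz, mul_smul_comm, hwz, hzw']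
    module
  have hw2z2 : w ^ 2 * z ^ 2 = (1 : A) - (Q + Q ^ 2) • x + (Q ^ 3) • x ^ 2 := by
    have e1 : w ^ 2 * z ^ 2 = w * ((w * z) * z) := by noncomm_ring
    have e2 : (w * z) * z = z - (Q * Q) • (z * x) := by
      rw [hwz, sub_mul, one_mul, smul_mul_assoc, hxz, smul_smul]
    have e3 : w * (z * x) = x - Q • (x * x) := by
      rw [← mul_assoc, hwz, sub_mul, one_mul, smul_mul_assoc]
    rw [e1, e2, mul_sub, mul_smul_comm, e3, hwz]
    have e4 : x * x = x ^ 2 := (pow_two x).symm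
    rw [e4]
    module
  -- assemble
  rw [hD, hσz2, hDxn m, hDz2, smul_mul_assoc, mul_smul_comm, smul_smul,
    mul_assoc (x ^ m) (w ^ 2) (z ^ 2), hw2z2]
  have px1 : x ^ m * x = x ^ (m + 1) := (pow_succ x m).symm
  have px2 : x ^ m * x ^ 2 = x ^ (m + 2) := by rw [← pow_add]
  have px3 : x ^ (m + 1) * x = x ^ (m + 2) := (pow_succ x (m + 1)).symm
  simp only [mul_sub, mul_add, mul_one, mul_smul_comm, smul_smul, px1, px2, px3,
    Nat.add_sub_cancel]
  rw [hqint (Q ^ 2) (m + 2), hqint (Q ^ 2) (m + 1)]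
  match_scalars <;> (field_simp <;> ring)
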